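/- arXiv:1208.4587 — 4 statements merged into one kernel-verified Lean document; each statement's English description precedes it below -/
import Mathlib

section
/- Let RF(n-1) be the reduced free group on generators τ₁,…,τ_{n-1}, i.e. the quotient of the free group F(n-1) by the normal closure of all elements [τ_i, g τ_i g⁻¹] for all i and all g ∈ F(n-1). Then the n-th term of the lower central series of RF(n-1) is trivial: RF(n-1)_n = {1}. -/
open scoped commutatorElement

open Subgroup

variable {G : Type*} [Group G]

theorem normal_iSup' {ι : Sort*} (N : ι → Subgroup G) (hN : ∀ i, (N i).Normal) :
    (⨆ i, N i).Normal := by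
  constructor
  intro x hx g
  refine Subgroup.iSup_induction N (C := fun y => g * y * g⁻¹ ∈ ⨆ i, N i) hx
    (fun i y hy => le_iSup N i ((hN i).conj_mem y hy g)) (by simpa using one_mem _)
    (fun a b ha hb => ?_)
  have : g * (a * b) * g⁻¹ = (g * a * g⁻¹) * (g * b * g⁻¹) := by group
  show g * (a * b) * g⁻¹ ∈ _; rw [this]; exact mul_mem ha hb

theorem commutator_iSup_le {α β : Type*} (A : α → Subgroup G) (B : β → Subgroup G)
    (hA : ∀ a, (A a).Normal) (hB : ∀ b, (B b).Normal) :
    ⁅⨆ a, A a, ⨆ b, B b⁆ ≤ ⨆ p : α × β, ⁅A p.1, B p.2⁆ := by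
  set M : Subgroup G := ⨆ p : α × β, ⁅A p.1, B p.2⁆ with hM
  have hMn : M.Normal := normal_iSup' _ fun p =>
    @Subgroup.commutator_normal _ _ _ _ (hA p.1) (hB p.2)
  rw [Subgroup.commutator_le]
  intro h hh
  refine Subgroup.iSup_induction A (C := fun h => ∀ k ∈ ⨆ b, B b, ⁅h, k⁆ ∈ M) hh
    (fun a x hx => ?_) (fun k _ => by simpa using one_mem M) (fun x y hx hy k hk => ?_)
  · intro k hk
    refine Subgroup.iSup_induction B (C := fun k => ⁅x, k⁆ ∈ M) hk
      (fun b y hy => le_iSup (fun p : α × β => ⁅A p.1, B p.2⁆) (a, b)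
        (Subgroup.commutator_mem_commutator hx hy)) (by simpa using one_mem M)
      (fun u v hu hv => ?_)
    have : ⁅x, u * v⁆ = ⁅x, u⁆ * (u * ⁅x, v⁆ * u⁻¹) := by
      simp only [commutatorElement_def]; group
    show ⁅x, u * v⁆ ∈ M; rw [this]; exact mul_mem hu (hMn.conj_mem _ hv u)
  · have : ⁅x * y, k⁆ = (x * ⁅y, k⁆ * x⁻¹) * ⁅x, k⁆ := by
      simp only [commutatorElement_def]; group
    show ⁅x * y, k⁆ ∈ M; rw [this]; exact mul_mem (hMn.conj_mem _ (hy k hk) x) (hx k hk)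

section Main

variable {ι : Type*} (N : ι → Subgroup G)

/-- Iterated left-normed commutator of the subgroups `N (g 0), ..., N (g k)`. -/
def iterComm (g : ℕ → ι) : ℕ → Subgroup G
  | 0 => N (g 0)
  | k + 1 => ⁅iterComm g k, N (g (k + 1))⁆

theorem iterComm_normal (hN : ∀ i, (N i).Normal) (g : ℕ → ι) : ∀ k, (iterComm N g k).Normal
  | 0 => hN (g 0)
  | k + 1 => @Subgroup.commutator_normal _ _ _ _ (iterComm_normal hN g k) (hN (g (k + 1)))

theorem iterComm_congr {g g' : ℕ → ι} (k : ℕ) (h : ∀ j ≤ k, g j = g' j) :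
    iterComm N g k = iterComm N g' k := by
  induction k with
  | zero => simp [iterComm, h 0 (le_refl 0)]
  | succ k ih =>
      simp only [iterComm]
      rw [ih (fun j hj => h j (hj.trans (Nat.le_succ k))), h (k+1) le_rfl]

theorem iterComm_le (hN : ∀ i, (N i).Normal) (g : ℕ → ι) :
    ∀ k, ∀ j ≤ k, iterComm N g k ≤ N (g j) := by
  intro k
  induction k with
  | zero => intro j hj; interval_cases j; exact le_rfl
  | succ k ih =>
      intro j hj
      rcases Nat.lt_or_ge j (k+1) with h | h
      · calc iterComm N g (k+1) ≤ iterComm N g k :=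
              @Subgroup.commutator_le_left _ _ _ _ (iterComm_normal N hN g k)
          _ ≤ N (g j) := ih j (Nat.lt_succ_iff.mp h)
      · have : j = k + 1 := le_antisymm hj h
        subst this
        exact @Subgroup.commutator_le_right _ _ _ _ (hN (g (k+1)))

theorem iterComm_antitone (hN : ∀ i, (N i).Normal) (g : ℕ → ι) : Antitone (iterComm N g) := by
  refine antitone_nat_of_succ_le fun k => ?_
  exact @Subgroup.commutator_le_left _ _ _ _ (iterComm_normal N hN g k)

theorem iterComm_eq_bot (hN : ∀ i, (N i).Normal) (habel : ∀ i, ⁅N i, N i⁆ = ⊥)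
    {g : ℕ → ι} {j₁ j₂ k : ℕ} (h1 : j₁ < j₂) (h2 : j₂ ≤ k)
    (heq : g j₁ = g j₂) : iterComm N g k = ⊥ := by
  obtain ⟨j, rfl⟩ : ∃ j, j₂ = j + 1 := ⟨j₂ - 1, by omega⟩
  have hle : iterComm N g (j+1) ≤ ⊥ := by
    show ⁅iterComm N g j, N (g (j+1))⁆ ≤ ⊥
    calc ⁅iterComm N g j, N (g (j+1))⁆ ≤ ⁅N (g (j+1)), N (g (j+1))⁆ :=
          Subgroup.commutator_mono (heq ▸ iterComm_le N hN g j j₁ (by omega)) le_rfl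
      _ = ⊥ := habel _
  exact le_bot_iff.mp ((iterComm_antitone N hN g h2).trans hle)

theorem lcs_le_iSup_iterComm [Nonempty ι] (hN : ∀ i, (N i).Normal)
    (hgen : ⨆ i, N i = ⊤) (k : ℕ) :
    (⊤ : Subgroup G).lowerCentralSeries k ≤ ⨆ g : ℕ → ι, iterComm N g k := by
  induction k with
  | zero =>
      rw [Subgroup.lowerCentralSeries_zero, ← hgen]
      exact iSup_le fun i => le_iSup_of_le (fun _ => i) le_rfl
  | succ k ih =>
      have hstep : (⊤ : Subgroup G).lowerCentralSeries (k+1) = ⁅(⊤ : Subgroup G).lowerCentralSeries k, ⊤⁆ := rfl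
      rw [hstep]; nth_rw 2 [← hgen]
      calc ⁅(⊤ : Subgroup G).lowerCentralSeries k, ⨆ i, N i⁆ ≤ ⁅⨆ g : ℕ → ι, iterComm N g k, ⨆ i, N i⁆ :=
            Subgroup.commutator_mono ih le_rfl
        _ ≤ ⨆ p : (ℕ → ι) × ι, ⁅iterComm N p.1 k, N p.2⁆ :=
            commutator_iSup_le _ _ (fun g => iterComm_normal N hN g k) hN
        _ ≤ ⨆ g : ℕ → ι, iterComm N g (k+1) := by
            refine iSup_le fun p => ?_
            obtain ⟨g, i⟩ := p
            refine le_iSup_of_le (fun j => if j = k + 1 then i else g j) ?_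
            show ⁅iterComm N g k, N i⁆ ≤ iterComm N _ (k+1)
            show ⁅iterComm N g k, N i⁆ ≤ ⁅iterComm N _ k, N _⁆
            rw [← iterComm_congr (g := g) (g' := fun j => if j = k+1 then i else g j) N k
              (fun j hj => by simp [Nat.ne_of_lt (Nat.lt_succ_of_le hj)])]
            simp

/-- A group generated by `m` abelian normal subgroups is nilpotent of class at most `m`. -/
theorem lcs_card_eq_bot {m : ℕ} (N : Fin m → Subgroup G) (hN : ∀ i, (N i).Normal)
    (habel : ∀ i, ⁅N i, N i⁆ = ⊥) (hgen : ⨆ i, N i = ⊤) :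
    (⊤ : Subgroup G).lowerCentralSeries m = ⊥ := by
  rcases Nat.eq_zero_or_pos m with rfl | hm
  · have htop : (⊤ : Subgroup G) = ⊥ := by rw [← hgen, iSup_of_empty]
    exact le_bot_iff.mp (htop ▸ le_top)
  have : Nonempty (Fin m) := ⟨⟨0, hm⟩⟩
  refine le_bot_iff.mp ((lcs_le_iSup_iterComm N hN hgen m).trans (iSup_le fun g => ?_))
  obtain ⟨a, b, hab, heq⟩ :=
    Fintype.exists_ne_map_eq_of_card_lt (fun j : Fin (m+1) => g j) (by simp)
  rcases Ne.lt_or_gt hab with h | h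
  · exact le_of_eq (iterComm_eq_bot N hN habel (show (a:ℕ) < b from h)
      (Nat.lt_succ_iff.mp b.2) heq)
  · exact le_of_eq (iterComm_eq_bot N hN habel (show (b:ℕ) < a from h)
      (Nat.lt_succ_iff.mp a.2) heq.symm)

end Main

open Subgroup

theorem commutator_closure_eq_bot' {G : Type*} [Group G] {s : Set G}
    (h : ∀ a ∈ s, ∀ b ∈ s, Commute a b) :
    ⁅Subgroup.closure s, Subgroup.closure s⁆ = ⊥ := by
  rw [eq_bot_iff, Subgroup.commutator_le]
  intro g₁ h₁ g₂ h₂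
  rw [Subgroup.mem_bot, commutatorElement_eq_one_iff_commute]
  exact Subgroup.closure_induction₂ (p := fun x y _ _ => Commute x y)
    (fun a b ha hb => h a ha b hb)
    (fun x _ => Commute.one_left x) (fun x _ => Commute.one_right x)
    (fun x y z _ _ _ hxz hyz => hxz.mul_left hyz)
    (fun y z x _ _ _ hxy hxz => hxy.mul_right hxz)
    (fun x y _ _ hxy => hxy.inv_left) (fun x y _ _ hxy => hxy.inv_right) h₁ h₂

/-- If `x` commutes with all of its conjugates, its normal closure is abelian. -/
theorem commutator_normalClosure_singleton_eq_bot {G : Type*} [Group G] {x : G}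
    (h : ∀ g : G, Commute x (g * x * g⁻¹)) :
    ⁅Subgroup.normalClosure {x}, Subgroup.normalClosure {x}⁆ = ⊥ := by
  have : Subgroup.normalClosure {x} = Subgroup.closure (Group.conjugatesOfSet {x}) := rfl
  rw [this]
  refine commutator_closure_eq_bot' fun a ha b hb => ?_
  rw [Group.mem_conjugatesOfSet_iff] at ha hb
  obtain ⟨xa, hxa, hca⟩ := ha
  obtain ⟨xb, hxb, hcb⟩ := hb
  rw [Set.mem_singleton_iff] at hxa hxb
  subst hxa hxb
  rw [isConj_iff] at hca hcb
  obtain ⟨u, rfl⟩ := hca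
  obtain ⟨v, rfl⟩ := hcb
  have := (h (u⁻¹ * v)).map (MulAut.conj u).toMonoidHom
  simpa [mul_assoc] using this


/-- Relations of the reduced free group: `[τ_i, g τ_i g⁻¹]` for all generators `i`
and all elements `g` of the free group. -/
def reducedFreeRels (m : ℕ) : Set (FreeGroup (Fin m)) :=
  {r | ∃ (i : Fin m) (g : FreeGroup (Fin m)),
    r = ⁅FreeGroup.of i, g * FreeGroup.of i * g⁻¹⁆}

/-- The reduced free group `RF(m)` on `m` generators. -/
def ReducedFreeGroup (m : ℕ) := PresentedGroup (reducedFreeRels m)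

instance (m : ℕ) : Group (ReducedFreeGroup m) := by
  unfold ReducedFreeGroup; infer_instance

theorem reducedFree_lcs_eq_bot (m : ℕ) :
    (⊤ : Subgroup (PresentedGroup (reducedFreeRels m))).lowerCentralSeries m = ⊥ := by
  set R := PresentedGroup (reducedFreeRels m)
  refine lcs_card_eq_bot (fun i : Fin m => Subgroup.normalClosure {PresentedGroup.of i})
    (fun i => Subgroup.normalClosure_normal) (fun i => ?_) ?_
  · refine commutator_normalClosure_singleton_eq_bot fun g => ?_
    obtain ⟨g₀, rfl⟩ := PresentedGroup.mk_surjective (reducedFreeRels m) g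
    rw [← commutatorElement_eq_one_iff_commute]
    have hmem : ⁅FreeGroup.of i, g₀ * FreeGroup.of i * g₀⁻¹⁆ ∈
        Subgroup.normalClosure (reducedFreeRels m) :=
      Subgroup.subset_normalClosure ⟨i, g₀, rfl⟩
    have h1 : PresentedGroup.mk (reducedFreeRels m)
        ⁅FreeGroup.of i, g₀ * FreeGroup.of i * g₀⁻¹⁆ = 1 :=
      (QuotientGroup.eq_one_iff _).mpr hmem
    rw [map_commutatorElement] at h1
    exact h1
  · rw [eq_top_iff, ← PresentedGroup.closure_range_of (reducedFreeRels m)]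
    refine Subgroup.closure_le _ |>.mpr ?_
    rintro x ⟨i, rfl⟩
    exact le_iSup (fun i : Fin m => Subgroup.normalClosure {PresentedGroup.of i}) i
      (Subgroup.subset_normalClosure rfl)

/-- The `n`-th term (in the paper's 1-based indexing, i.e. Mathlib's
`lowerCentralSeries _ (n-1)`) of the lower central series of `RF(n-1)` is trivial. -/
theorem stmt0 (n : ℕ) (hn : 1 ≤ n) :
    (⊤ : Subgroup (ReducedFreeGroup (n - 1))).lowerCentralSeries (n - 1) = ⊥ := by
  exact reducedFree_lcs_eq_bot (n - 1)
end

section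
/- In the reduced free group RF(n-1) on generators τ₁,…,τ_{n-1}, every simple iterated commutator [τ_{i₁}, τ_{i₂}, …, τ_{i_k}] (meaning [⋯[[τ_{i₁},τ_{i₂}],τ_{i₃}],…,τ_{i_k}]) in which some generator appears twice (τ_{i_s} = τ_{i_r} for some s ≠ r with the repetition occurring after the first occurrence) is trivial. -/
open scoped commutatorElement

/-- The generators `τ_i` of the reduced free group. -/
def ReducedFreeGroup.τ {m : ℕ} (i : Fin m) : ReducedFreeGroup m :=
  PresentedGroup.of i

/-- Left-normed simple commutator `[a₁,…,a_k] = [⋯[[a₁,a₂],a₃],…,a_k]`. -/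
def simpleCommutator {G : Type*} [Group G] : List G → G
  | [] => 1
  | a :: t => t.foldl (fun x y => ⁅x, y⁆) a

namespace RFAux

open ReducedFreeGroup

/-- The defining relation holds for every element of the quotient. -/
lemma rel_one {m : ℕ} (i : Fin m) (g : ReducedFreeGroup m) :
    ⁅τ i, g * τ i * g⁻¹⁆ = 1 := by
  obtain ⟨g, rfl⟩ := PresentedGroup.mk_surjective (reducedFreeRels m) g
  have hmem : ⁅FreeGroup.of i, g * FreeGroup.of i * g⁻¹⁆ ∈ reducedFreeRels m := ⟨i, g, rfl⟩
  have h1 : PresentedGroup.mk (reducedFreeRels m)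
      ⁅FreeGroup.of i, g * FreeGroup.of i * g⁻¹⁆ = 1 :=
    (QuotientGroup.eq_one_iff _).mpr (Subgroup.subset_normalClosure hmem)
  have := h1
  rw [map_commutatorElement, map_mul, map_mul, map_inv] at this
  exact this

/-- Any two conjugates of a generator commute. -/
lemma conj_comm {m : ℕ} (i : Fin m) (x y : ReducedFreeGroup m) :
    Commute (x * τ i * x⁻¹) (y * τ i * y⁻¹) := by
  rw [← commutatorElement_eq_one_iff_commute]
  have h := rel_one i (x⁻¹ * y)
  have hc : ⁅x * τ i * x⁻¹, y * τ i * y⁻¹⁆ =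
      x * ⁅τ i, (x⁻¹ * y) * τ i * (x⁻¹ * y)⁻¹⁆ * x⁻¹ := by
    group
  rw [hc, h, mul_one, mul_inv_cancel]

/-- Any two elements of the normal closure of a generator commute. -/
lemma normalClosure_comm {m : ℕ} (i : Fin m) {x y : ReducedFreeGroup m}
    (hx : x ∈ Subgroup.normalClosure {τ i}) (hy : y ∈ Subgroup.normalClosure {τ i}) :
    Commute x y := by
  have key : ∀ a ∈ Group.conjugatesOfSet ({τ i} : Set (ReducedFreeGroup m)),
      ∀ b ∈ Group.conjugatesOfSet ({τ i} : Set (ReducedFreeGroup m)), Commute a b := by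
    intro a ha b hb
    rw [Group.mem_conjugatesOfSet_iff] at ha hb
    obtain ⟨a', ha', hca⟩ := ha
    obtain ⟨b', hb', hcb⟩ := hb
    rw [Set.mem_singleton_iff] at ha' hb'
    subst ha'; subst hb'
    obtain ⟨c, hc⟩ := isConj_iff.mp hca
    obtain ⟨d, hd⟩ := isConj_iff.mp hcb
    rw [← hc, ← hd]
    exact conj_comm i c d
  rw [Subgroup.normalClosure] at hx hy
  induction hx, hy using Subgroup.closure_induction₂ with
  | mem a b ha hb => exact key a ha b hb
  | one_left b hb => exact Commute.one_left b
  | one_right a ha => exact Commute.one_right a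
  | mul_left a b c _ _ _ h1 h2 => exact h1.mul_left h2
  | mul_right a b c _ _ _ h1 h2 => exact h1.mul_right h2
  | inv_left a b _ _ h => exact h.inv_left
  | inv_right a b _ _ h => exact h.inv_right

variable {G : Type*} [Group G]

lemma commutator_mem_left (N : Subgroup G) [N.Normal] {x : G} (hx : x ∈ N) (y : G) :
    ⁅x, y⁆ ∈ N := by
  have h : ⁅x, y⁆ = x * (y * x⁻¹ * y⁻¹) := by group
  rw [h]
  exact mul_mem hx (Subgroup.Normal.conj_mem ‹N.Normal› _ (inv_mem hx) y)

lemma commutator_mem_right (N : Subgroup G) [N.Normal] (x : G) {y : G} (hy : y ∈ N) :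
    ⁅x, y⁆ ∈ N := by
  have h : ⁅x, y⁆ = (x * y * x⁻¹) * y⁻¹ := by group
  rw [h]
  exact mul_mem (Subgroup.Normal.conj_mem ‹N.Normal› _ hy x) (inv_mem hy)

lemma foldl_mem (N : Subgroup G) [N.Normal] :
    ∀ (l : List G) (a : G), (a ∈ N ∨ ∃ b ∈ l, b ∈ N) →
      l.foldl (fun x y => ⁅x, y⁆) a ∈ N := by
  intro l
  induction l with
  | nil =>
    intro a ha
    rcases ha with h | ⟨b, hb, _⟩
    · exact h
    · simp at hb
  | cons c t ih =>
    intro a ha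
    rw [List.foldl_cons]
    rcases ha with h | ⟨b, hb, hbN⟩
    · exact ih _ (Or.inl (commutator_mem_left N h c))
    · rcases List.mem_cons.mp hb with rfl | hbt
      · exact ih _ (Or.inl (commutator_mem_right N a hbN))
      · exact ih _ (Or.inr ⟨b, hbt, hbN⟩)

lemma foldl_one (l : List G) : l.foldl (fun x y => ⁅x, y⁆) 1 = 1 := by
  induction l with
  | nil => rfl
  | cons b t ih =>
    rw [List.foldl_cons]
    have : ⁅(1 : G), b⁆ = 1 := by simp [commutatorElement_def]
    rw [this, ih]

lemma simpleCommutator_eq_one_of_split (N : Subgroup G) [N.Normal]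
    (hab : ∀ x ∈ N, ∀ y ∈ N, Commute x y)
    (h : G) (u l3 : List G) {b : G} (hb : b ∈ N)
    (hu : h ∈ N ∨ ∃ a ∈ u, a ∈ N) :
    simpleCommutator (h :: (u ++ b :: l3)) = 1 := by
  show (u ++ b :: l3).foldl (fun x y => ⁅x, y⁆) h = 1
  rw [List.foldl_append, List.foldl_cons]
  have hp : u.foldl (fun x y => ⁅x, y⁆) h ∈ N := foldl_mem N u h hu
  have h1 : ⁅u.foldl (fun x y => ⁅x, y⁆) h, b⁆ = 1 :=
    commutatorElement_eq_one_iff_commute.mpr (hab _ hp _ hb)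
  rw [h1]
  exact foldl_one l3

end RFAux

/-- Any simple iterated commutator of generators of the reduced free group
in which some generator repeats (the repetition occurring after the first
occurrence) is trivial. -/
theorem stmt1 (m k : ℕ) (i : Fin k → Fin m) (s r : Fin k)
    (hsr : s < r) (hrep : i s = i r) :
    simpleCommutator (List.ofFn fun j => ReducedFreeGroup.τ (i j)) = 1 := by
  obtain ⟨k', rfl⟩ : ∃ k', k = k' + 1 := by
    cases k with
    | zero => exact r.elim0
    | succ k' => exact ⟨k', rfl⟩
  set f : Fin (k' + 1) → ReducedFreeGroup m := fun j => ReducedFreeGroup.τ (i j) with hf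
  set N : Subgroup (ReducedFreeGroup m) := Subgroup.normalClosure {ReducedFreeGroup.τ (i s)}
    with hN
  have hNnormal : N.Normal := Subgroup.normalClosure_normal
  have hab : ∀ x ∈ N, ∀ y ∈ N, Commute x y := fun x hx y hy =>
    RFAux.normalClosure_comm (i s) hx hy
  -- the tail of the list
  set t : List (ReducedFreeGroup m) := List.ofFn (fun j : Fin k' => f j.succ) with ht
  have hL : List.ofFn f = f 0 :: t := by
    rw [List.ofFn_succ]
  have htlen : t.length = k' := by simp [ht]
  -- position of the repeated generator in the tail
  have hr1 : 1 ≤ (r : ℕ) := by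
    have h1 : (s : ℕ) < (r : ℕ) := hsr
    omega
  have hrk : (r : ℕ) < k' + 1 := r.isLt
  set p : ℕ := (r : ℕ) - 1 with hp
  have hbp : p < t.length := by rw [htlen]; omega
  have hbval : t[p]'hbp = f r := by
    simp only [ht, List.getElem_ofFn]
    congr 1
    ext
    simp only [Fin.val_succ]
    omega
  have hsplit : t = t.take p ++ f r :: t.drop (p + 1) := by
    conv_lhs => rw [← List.take_append_drop p t, List.drop_eq_getElem_cons hbp]
    rw [hbval]
  have hbN : f r ∈ N := by
    have heq : f r = ReducedFreeGroup.τ (i s) := by rw [hf]; simp [hrep]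
    rw [heq]
    exact Subgroup.subset_normalClosure rfl
  have hu : f 0 ∈ N ∨ ∃ a ∈ t.take p, a ∈ N := by
    rcases Nat.eq_zero_or_pos (s : ℕ) with hs0 | hspos
    · left
      have h0s : (0 : Fin (k' + 1)) = s := by ext; simp [hs0]
      rw [h0s, hf]
      exact Subgroup.subset_normalClosure rfl
    · right
      have hsr' : (s : ℕ) < (r : ℕ) := hsr
      have hq : (s : ℕ) - 1 < (t.take p).length := by
        simp only [List.length_take, htlen]
        omega
      refine ⟨(t.take p)[(s : ℕ) - 1]'hq, List.getElem_mem hq, ?_⟩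
      have hq2 : (s : ℕ) - 1 < t.length := by rw [htlen]; omega
      have h1 : (t.take p)[(s : ℕ) - 1]'hq = t[(s : ℕ) - 1]'hq2 := List.getElem_take ..
      have h2 : t[(s : ℕ) - 1]'hq2 = f s := by
        simp only [ht, List.getElem_ofFn]
        congr 1
        ext
        simp only [Fin.val_succ]
        omega
      rw [h1, h2, hf]
      exact Subgroup.subset_normalClosure rfl
  haveI := hNnormal
  rw [hL, hsplit]
  exact RFAux.simpleCommutator_eq_one_of_split N hab (f 0) (t.take p) (t.drop (p + 1)) hbN hu
end

section
/- Let F be the free group on generators t₁,…,t_m, and let G be a quotient of F in which every left-normed commutator [t_{i₁},…,t_{i_k}] with a repeated index (i_s = i_r for some s < r) is trivial, and moreover all commutators of length n are trivial. Then G is nilpotent of class at most n−1. -/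
open scoped commutatorElement

lemma simpleCommutator_map {G H : Type*} [Group G] [Group H] (φ : G →* H) :
    ∀ l : List G, φ (simpleCommutator l) = simpleCommutator (l.map φ)
  | [] => by simp [simpleCommutator]
  | a :: t => by
    simp only [simpleCommutator, List.map_cons, List.foldl_map]
    induction t generalizing a with
    | nil => rfl
    | cons b t ih =>
      simp only [List.foldl_cons]
      rw [← map_commutatorElement]
      exact ih _

lemma simpleCommutator_concat {G : Type*} [Group G] (l : List G) (x : G) (h : l ≠ []) :
    simpleCommutator (l ++ [x]) = ⁅simpleCommutator l, x⁆ := by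
  cases l with
  | nil => exact absurd rfl h
  | cons a t => simp [simpleCommutator, List.foldl_append]

/-- Let `G` be a quotient of the free group on `t₁,…,t_m` in which every
left-normed commutator of generators with a repeated index is trivial, and all
commutators of generators of length `n` are trivial.  Then `G` is nilpotent of
class at most `n-1`, i.e. the paper's `G_n` (Mathlib's
`lowerCentralSeries G (n-1)`) is trivial. -/
theorem stmt11 (m n : ℕ) (hn : 1 ≤ n) (G : Type*) [Group G]
    (φ : FreeGroup (Fin m) →* G) (hsurj : Function.Surjective φ)
    (hrep : ∀ (k : ℕ) (i : Fin k → Fin m) (s r : Fin k), s < r → i s = i r →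
      φ (simpleCommutator (List.ofFn fun j => FreeGroup.of (i j))) = 1)
    (hlen : ∀ i : Fin n → Fin m,
      φ (simpleCommutator (List.ofFn fun j => FreeGroup.of (i j))) = 1) :
    (⊤ : Subgroup G).lowerCentralSeries (n - 1) = ⊥ := by
  -- the set of images of generators
  set T : Set G := Set.range (fun i : Fin m => φ (FreeGroup.of i)) with hT
  -- the set of left-normed commutators of length k in the generators
  set S : ℕ → Set G := fun k =>
    {g | ∃ i : Fin k → Fin m,
      g = simpleCommutator (List.ofFn fun j => φ (FreeGroup.of (i j)))} with hS
  -- G is generated by T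
  have hgen : Subgroup.closure T = ⊤ := by
    rw [eq_top_iff, ← MonoidHom.range_eq_top.2 hsurj, MonoidHom.range_eq_map,
      ← FreeGroup.closure_range_of (Fin m), MonoidHom.map_closure]
    apply Subgroup.closure_mono
    rintro x ⟨y, ⟨i, rfl⟩, rfl⟩
    exact ⟨i, rfl⟩
  -- main induction: γ_{k+1} is contained in the normal closure of S (k+1)
  have key : ∀ k : ℕ, (⊤ : Subgroup G).lowerCentralSeries k ≤ Subgroup.normalClosure (S (k + 1)) := by
    intro k
    induction k with
    | zero =>
      rw [Subgroup.lowerCentralSeries_zero, ← hgen]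
      refine le_trans ?_ Subgroup.closure_le_normalClosure
      apply Subgroup.closure_mono
      rintro x ⟨i, rfl⟩
      refine ⟨fun _ => i, ?_⟩
      simp [simpleCommutator]
    | succ k ih =>
      set M : Subgroup G := Subgroup.normalClosure (S (k + 2)) with hM
      haveI : M.Normal := Subgroup.normalClosure_normal
      -- every element of S (k+1) is central modulo M
      have hScentral : ∀ c ∈ S (k + 1),
          (c : G ⧸ M) ∈ Subgroup.center (G ⧸ M) := by
        rintro c ⟨i, rfl⟩
        rw [Subgroup.mem_center_iff]
        -- it suffices to check commuting with the generators of G ⧸ M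
        have hQgen : Subgroup.closure ((QuotientGroup.mk' M) '' T) = ⊤ := by
          rw [← MonoidHom.map_closure (QuotientGroup.mk' M) T, hgen]
          exact Subgroup.map_top_of_surjective _ (QuotientGroup.mk'_surjective M)
        intro q
        have hq : q ∈ Subgroup.closure ((QuotientGroup.mk' M) '' T) := by
          rw [hQgen]; trivial
        have : q ∈ Subgroup.centralizer
            {(↑(simpleCommutator (List.ofFn fun j => φ (FreeGroup.of (i j)))) : G ⧸ M)} := by
          refine Subgroup.closure_le _ |>.2 ?_ hq
          rintro _ ⟨t, ⟨j, rfl⟩, rfl⟩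
          simp only [SetLike.mem_coe]
          rw [Subgroup.mem_centralizer_singleton_iff]
          -- the commutator of c with a generator is a commutator of length k+2
          have hlist : (List.ofFn fun j' : Fin (k + 2) => φ (FreeGroup.of ((Fin.snoc i j : Fin (k + 2) → Fin m) j')))
              = (List.ofFn fun j' => φ (FreeGroup.of (i j'))) ++ [φ (FreeGroup.of j)] := by
            rw [List.ofFn_succ' (fun j' : Fin (k + 2) => φ (FreeGroup.of ((Fin.snoc i j : Fin (k + 2) → Fin m) j')))]
            simp [Fin.snoc_castSucc, Fin.snoc_last, List.concat_eq_append]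
          have hcomm : ⁅simpleCommutator (List.ofFn fun j' => φ (FreeGroup.of (i j'))),
              φ (FreeGroup.of j)⁆ ∈ M := by
            apply Subgroup.subset_normalClosure
            refine ⟨(Fin.snoc i j : Fin (k + 2) → Fin m), ?_⟩
            rw [hlist, simpleCommutator_concat]
            simp [List.ofFn_eq_nil_iff]
          have h1 : ((⁅simpleCommutator (List.ofFn fun j' => φ (FreeGroup.of (i j'))),
              φ (FreeGroup.of j)⁆ : G) : G ⧸ M) = 1 :=
            (QuotientGroup.eq_one_iff _).2 hcomm
          rw [show ((⁅simpleCommutator (List.ofFn fun j' => φ (FreeGroup.of (i j'))),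
              φ (FreeGroup.of j)⁆ : G) : G ⧸ M)
              = ⁅((simpleCommutator (List.ofFn fun j' => φ (FreeGroup.of (i j'))) : G) : G ⧸ M),
                ((φ (FreeGroup.of j) : G) : G ⧸ M)⁆ from
              map_commutatorElement (QuotientGroup.mk' M) _ _,
            commutatorElement_eq_one_iff_mul_comm] at h1
          exact h1.symm
        rwa [Subgroup.mem_centralizer_singleton_iff] at this
      -- hence the normal closure of S (k+1) is central modulo M
      have hNcentral : Subgroup.normalClosure (S (k + 1)) ≤
          (Subgroup.center (G ⧸ M)).comap (QuotientGroup.mk' M) := by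
        haveI : ((Subgroup.center (G ⧸ M)).comap (QuotientGroup.mk' M)).Normal :=
          Subgroup.Normal.comap inferInstance _
        exact Subgroup.normalClosure_le_normal (fun c hc => hScentral c hc)
      show ⁅(⊤ : Subgroup G).lowerCentralSeries k, (⊤ : Subgroup G)⁆ ≤ M
      rw [Subgroup.commutator_le]
      intro x hx g _
      have hxc : (x : G ⧸ M) ∈ Subgroup.center (G ⧸ M) := hNcentral (ih hx)
      have h1 : ((⁅x, g⁆ : G) : G ⧸ M) = 1 := by
        rw [show ((⁅x, g⁆ : G) : G ⧸ M) = ⁅((x : G) : G ⧸ M), ((g : G) : G ⧸ M)⁆ from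
            map_commutatorElement (QuotientGroup.mk' M) _ _,
          commutatorElement_eq_one_iff_mul_comm]
        exact (Subgroup.mem_center_iff.1 hxc _).symm
      exact (QuotientGroup.eq_one_iff _).1 h1
  -- conclude
  have h1 : (⊤ : Subgroup G).lowerCentralSeries (n - 1) ≤ Subgroup.normalClosure (S n) := by
    have := key (n - 1)
    rwa [Nat.sub_add_cancel hn] at this
  rw [eq_bot_iff]
  refine le_trans h1 (Subgroup.normalClosure_le_normal ?_)
  rintro _ ⟨i, rfl⟩
  have := hlen i
  rw [simpleCommutator_map, List.map_ofFn] at this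
  simp only [Subgroup.coe_bot, Set.mem_singleton_iff]
  exact this
end

section
/- Let μ be functions on a monoid M indexed by subsequences, satisfying the product formula μ(j₁,…,j_p)(z₁z₂) = μ(j₁,…,j_p)(z₁) + μ(j₁,…,j_p)(z₂) + Σ_{k=1}^{p-1} μ(j₁,…,j_k)(z₁)μ(j_{k+1},…,j_p)(z₂). Suppose elements g_σ (σ ∈ Σ, a finite index set) satisfy μ(I)(g_σ) = 0 for all proper (shorter) index sequences I, and μ(I_ξ)(g_σ) = δ_{ξσ} (Kronecker delta) for designated top-length sequences I_ξ, ξ ∈ Σ. Then for z = Π_σ g_σ^{e_σ} (any order, any integer exponents e_σ, assuming the g_σ and their inverses also have vanishing lower invariants), one has μ(I_ξ)(z) = e_ξ for every ξ. -/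
/-- Abstract form of "exponents in the normal form equal the Milnor invariants":
with `μ` satisfying the Milnor product formula, if the elements `g_σ` (and their
inverses) have vanishing invariants in all lengths `< p` and satisfy
`μ(I_ξ)(g_σ) = δ_{ξσ}` for the designated top-length-`p` sequences `I_ξ`, then for
`z = Π_σ g_σ^{e_σ}` (product in any order) one has `μ(I_ξ)(z) = e_ξ`. -/
theorem stmt14 (ι S G : Type*) [Group G] [DecidableEq S]
    (μ : List ι → G → ℤ)
    (hprod : ∀ (I : List ι) (z₁ z₂ : G), μ I (z₁ * z₂) =
      μ I z₁ + μ I z₂ + ∑ k ∈ Finset.Ico 1 I.length, μ (I.take k) z₁ * μ (I.drop k) z₂)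
    (p : ℕ) (hp : 0 < p) (topSeq : S → List ι)
    (hlen : ∀ ξ, (topSeq ξ).length = p)
    (g : S → G) (e : S → ℤ)
    (hlow : ∀ (σ : S) (I : List ι), I.length < p → μ I (g σ) = 0 ∧ μ I (g σ)⁻¹ = 0)
    (htop : ∀ ξ σ : S, μ (topSeq ξ) (g σ) = if ξ = σ then 1 else 0)
    (l : List S) (hnd : l.Nodup) (hall : ∀ σ : S, σ ∈ l) :
    ∀ ξ : S, μ (topSeq ξ) ((l.map fun σ => g σ ^ e σ).prod) = e ξ := by
  -- μ of identity vanishes in all lengths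
  have hone : ∀ I : List ι, μ I (1 : G) = 0 := by
    suffices h : ∀ n (I : List ι), I.length = n → μ I (1 : G) = 0 by
      exact fun I => h I.length I rfl
    intro n
    induction n using Nat.strong_induction_on with
    | _ n ih =>
      intro I hI
      have h1 := hprod I 1 1
      rw [mul_one] at h1
      have hsum : ∑ k ∈ Finset.Ico 1 I.length, μ (I.take k) 1 * μ (I.drop k) 1 = 0 := by
        apply Finset.sum_eq_zero
        intro k hk
        simp only [Finset.mem_Ico] at hk
        have hd : μ (I.drop k) (1 : G) = 0 := by
          apply ih (I.length - k) (by omega)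
          simp [List.length_drop]
        rw [hd, mul_zero]
      rw [hsum] at h1
      linarith
  -- vanishing of low invariants is multiplicative
  have hVmul : ∀ z₁ z₂ : G, (∀ I : List ι, I.length < p → μ I z₁ = 0) →
      (∀ I : List ι, I.length < p → μ I z₂ = 0) →
      ∀ I : List ι, I.length < p → μ I (z₁ * z₂) = 0 := by
    intro z₁ z₂ h₁ h₂ I hI
    rw [hprod, h₁ I hI, h₂ I hI]
    have hsum : ∑ k ∈ Finset.Ico 1 I.length, μ (I.take k) z₁ * μ (I.drop k) z₂ = 0 := by
      apply Finset.sum_eq_zero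
      intro k hk
      simp only [Finset.mem_Ico] at hk
      have ht : μ (I.take k) z₁ = 0 := by
        apply h₁
        rw [List.length_take]
        omega
      rw [ht, zero_mul]
    rw [hsum]; ring
  -- low invariants of powers vanish
  have hVpow : ∀ (σ : S) (n : ℤ) (I : List ι), I.length < p → μ I (g σ ^ n) = 0 := by
    intro σ n
    induction n using Int.induction_on with
    | zero => simpa using fun I _ => hone I
    | succ k ih =>
      intro I hI
      rw [zpow_add_one]
      exact hVmul _ _ ih (fun J hJ => (hlow σ J hJ).1) I hI
    | pred k ih =>
      intro I hI
      rw [zpow_sub_one]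
      exact hVmul _ _ ih (fun J hJ => (hlow σ J hJ).2) I hI
  -- additivity of top invariants when the first factor has vanishing low invariants
  have hadd : ∀ (ξ : S) (z₁ z₂ : G), (∀ I : List ι, I.length < p → μ I z₁ = 0) →
      μ (topSeq ξ) (z₁ * z₂) = μ (topSeq ξ) z₁ + μ (topSeq ξ) z₂ := by
    intro ξ z₁ z₂ h₁
    rw [hprod]
    have hsum : ∑ k ∈ Finset.Ico 1 (topSeq ξ).length,
        μ ((topSeq ξ).take k) z₁ * μ ((topSeq ξ).drop k) z₂ = 0 := by
      apply Finset.sum_eq_zero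
      intro k hk
      simp only [Finset.mem_Ico, hlen] at hk
      have ht : μ ((topSeq ξ).take k) z₁ = 0 := by
        apply h₁
        rw [List.length_take, hlen]
        omega
      rw [ht, zero_mul]
    rw [hsum]; ring
  -- top invariant of a power
  have htoppow : ∀ (ξ σ : S) (n : ℤ),
      μ (topSeq ξ) (g σ ^ n) = n * (if ξ = σ then 1 else 0) := by
    intro ξ σ
    have hinv : μ (topSeq ξ) (g σ)⁻¹ = -(if ξ = σ then 1 else 0) := by
      have := hadd ξ (g σ) (g σ)⁻¹ (fun J hJ => (hlow σ J hJ).1)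
      rw [mul_inv_cancel, hone, htop] at this
      linarith
    intro n
    induction n using Int.induction_on with
    | zero => simpa using hone (topSeq ξ)
    | succ k ih =>
      rw [zpow_add_one, hadd ξ _ _ (fun J hJ => hVpow σ k J hJ), ih, htop]
      push_cast; ring
    | pred k ih =>
      rw [zpow_sub_one, hadd ξ _ _ (fun J hJ => hVpow σ (-k) J hJ), ih, hinv]
      push_cast; ring
  -- main computation by induction on the list
  have hmain : ∀ (l' : List S) (ξ : S),
      μ (topSeq ξ) ((l'.map fun σ => g σ ^ e σ).prod) =
        (l'.map fun σ => if ξ = σ then e σ else 0).sum := by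
    intro l'
    induction l' with
    | nil => intro ξ; simpa using hone (topSeq ξ)
    | cons a t ih =>
      intro ξ
      simp only [List.map_cons, List.prod_cons, List.sum_cons]
      rw [hadd ξ _ _ (fun J hJ => hVpow a (e a) J hJ), htoppow, ih]
      by_cases h : ξ = a <;> simp [h]
  -- the sum picks out e ξ since l is nodup and contains ξ
  have hsum : ∀ (ξ : S) (l' : List S), l'.Nodup → ξ ∈ l' →
      (l'.map fun σ => if ξ = σ then e σ else 0).sum = e ξ := by
    intro ξ l'
    induction l' with
    | nil => intro _ hξ; exact absurd hξ List.not_mem_nil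
    | cons a t ih =>
      intro hnd' hξ
      simp only [List.map_cons, List.sum_cons]
      rcases List.mem_cons.mp hξ with h | h
      · subst h
        have hz : (t.map fun σ => if ξ = σ then e σ else 0).sum = 0 := by
          apply List.sum_eq_zero
          intro x hx
          rcases List.mem_map.mp hx with ⟨σ, hσ, rfl⟩
          have : ξ ≠ σ := fun hh => (List.nodup_cons.mp hnd').1 (hh ▸ hσ)
          simp [this]
        simp [hz]
      · have hne : ξ ≠ a := fun hh => (List.nodup_cons.mp hnd').1 (hh ▸ h)
        rw [ih (List.nodup_cons.mp hnd').2 h]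
        simp [hne]
  intro ξ
  rw [hmain l ξ, hsum ξ l hnd (hall ξ)]
end
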